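/- Let S, T be n×k matrices, J a k×k matrix, D a k×k matrix, and set W + J = ᵀT S D with SJ = T, TJ = S, ᵀJ = J. Then the block-matrix identity [[I_n, 0],[ᵀT, I_k]]·[[I_n(1-u^2), SDu],[0, I_k - (ᵀTSD - J)u]] = [[I_n - SDᵀTu + (SDᵀS - I_n)u^2, SDu],[0, I_k + Ju]]·[[I_n, 0],[ᵀT - ᵀSu, I_k]] holds, and consequently (1-u^2)^n det(I_k - (ᵀTSD - J)u) = det(I_n - SDᵀTu + (SDᵀS - I_n)u^2) det(I_k + Ju). -/
import Mathlib


open Matrix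

/-- the block-matrix identity underlying Bass's three-term formula.
With `S, T : n×k`, `J, D : k×k` satisfying `SJ = T`, `TJ = S`, `ᵀJ = J`, and
`W := ᵀT S D - J` (so that `W + J = ᵀT S D`), the stated block identity holds, and
consequently `(1-u²)^n det(I_k - (ᵀTSD - J)u)
  = det(I_n - SDᵀTu + (SDᵀS - I_n)u²) · det(I_k + Ju)`. -/
theorem bass_block_identity {R : Type*} [CommRing R] (n k : ℕ) (u : R)
    (S T : Matrix (Fin n) (Fin k) R) (J D : Matrix (Fin k) (Fin k) R)
    (hSJ : S * J = T) (hTJ : T * J = S) (hJ : Jᵀ = J) :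
    (Matrix.fromBlocks (1 : Matrix (Fin n) (Fin n) R) 0 Tᵀ (1 : Matrix (Fin k) (Fin k) R) *
      Matrix.fromBlocks ((1 - u ^ 2) • (1 : Matrix (Fin n) (Fin n) R)) (u • (S * D))
        0 (1 - u • (Tᵀ * S * D - J)) =
    Matrix.fromBlocks
        (1 - u • (S * D * Tᵀ) + (u ^ 2) • (S * D * Sᵀ - 1)) (u • (S * D))
        0 (1 + u • J) *
      Matrix.fromBlocks (1 : Matrix (Fin n) (Fin n) R) 0 (Tᵀ - u • Sᵀ)
        (1 : Matrix (Fin k) (Fin k) R)) ∧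
    (1 - u ^ 2) ^ n * Matrix.det (1 - u • (Tᵀ * S * D - J)) =
      Matrix.det (1 - u • (S * D * Tᵀ) + (u ^ 2) • (S * D * Sᵀ - 1)) *
        Matrix.det (1 + u • J) := by
  have hJT : J * Tᵀ = Sᵀ := by
    calc J * Tᵀ = Jᵀ * Tᵀ := by rw [hJ]
    _ = (T * J)ᵀ := (Matrix.transpose_mul T J).symm
    _ = Sᵀ := by rw [hTJ]
  have hJS : J * Sᵀ = Tᵀ := by
    calc J * Sᵀ = Jᵀ * Sᵀ := by rw [hJ]
    _ = (S * J)ᵀ := (Matrix.transpose_mul S J).symm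
    _ = Tᵀ := by rw [hSJ]
  have hblock : (Matrix.fromBlocks (1 : Matrix (Fin n) (Fin n) R) 0 Tᵀ (1 : Matrix (Fin k) (Fin k) R) *
      Matrix.fromBlocks ((1 - u ^ 2) • (1 : Matrix (Fin n) (Fin n) R)) (u • (S * D))
        0 (1 - u • (Tᵀ * S * D - J)) =
    Matrix.fromBlocks
        (1 - u • (S * D * Tᵀ) + (u ^ 2) • (S * D * Sᵀ - 1)) (u • (S * D))
        0 (1 + u • J) *
      Matrix.fromBlocks (1 : Matrix (Fin n) (Fin n) R) 0 (Tᵀ - u • Sᵀ)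
        (1 : Matrix (Fin k) (Fin k) R)) := by
    rw [Matrix.fromBlocks_multiply, Matrix.fromBlocks_multiply, Matrix.fromBlocks_inj]
    refine ⟨?_, ?_, ?_, ?_⟩
    · simp only [Matrix.one_mul, Matrix.mul_one, Matrix.mul_zero, Matrix.zero_mul,
        add_zero, zero_add, Matrix.add_mul, Matrix.sub_mul, Matrix.mul_sub,
        Matrix.smul_mul, Matrix.mul_smul, smul_sub, smul_smul, pow_two]
      rw [sub_smul, one_smul]
      abel
    · simp
    · simp only [Matrix.one_mul, Matrix.mul_one, Matrix.mul_zero, Matrix.zero_mul,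
        add_zero, zero_add, Matrix.add_mul, Matrix.sub_mul, Matrix.mul_sub,
        Matrix.smul_mul, Matrix.mul_smul, hJT, hJS, smul_sub, smul_smul, pow_two]
      module
    · simp only [Matrix.one_mul, Matrix.mul_one, Matrix.mul_zero, Matrix.zero_mul,
        add_zero, zero_add, Matrix.mul_smul, smul_sub, ← Matrix.mul_assoc]
      abel
  refine ⟨hblock, ?_⟩
  have := congrArg Matrix.det hblock
  rw [Matrix.det_mul, Matrix.det_mul, Matrix.det_fromBlocks_zero₁₂,
    Matrix.det_fromBlocks_zero₂₁, Matrix.det_fromBlocks_zero₂₁,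
    Matrix.det_fromBlocks_zero₁₂] at this
  simp only [Matrix.det_one, one_mul, mul_one, Matrix.det_smul, Matrix.det_one,
    Fintype.card_fin, smul_eq_mul, mul_one] at this
  exact this
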